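/- Let n ≥ 1 be a natural number, 1 < p < q < p*(n), and 0 < ω < ω_{p,q}. Then ω < ω_{σ,τ,p,q}. -/

import Mathlib

/-- `σ = n/(p+1) - (n-2)/2`. -/
noncomputable def sigma (n : ℕ) (p : ℝ) : ℝ := n / (p + 1) - ((n : ℝ) - 2) / 2

/-- `τ = n/(q+1) - (n-2)/2`. -/
noncomputable def tau (n : ℕ) (q : ℝ) : ℝ := n / (q + 1) - ((n : ℝ) - 2) / 2

/-- The critical frequency `ω_{p,q}`. -/
noncomputable def omegaPQ (p q : ℝ) : ℝ :=
  (2 * (q - p) / ((p + 1) * (q - 1))) *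
    (((p - 1) * (q + 1)) / ((p + 1) * (q - 1))) ^ ((p - 1) / (q - p))

/-- The critical frequency `ω_{σ,τ,p,q}`. -/
noncomputable def omegaSig (n : ℕ) (p q : ℝ) : ℝ :=
  sigma n p * ((q - p) / (q - 1)) *
    ((sigma n p * (p - 1)) / (tau n q * (q - 1))) ^ ((p - 1) / (q - p))

/-- Concavity of `log`: `l * log y ≤ log (l * y + (1 - l))` for `0 < y`, `l ∈ [0,1]`. -/
lemma log_concave_aux (y l : ℝ) (hy : 0 < y) (h0 : 0 ≤ l) (h1 : l ≤ 1) :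
    l * Real.log y ≤ Real.log (l * y + (1 - l)) := by
  have h1' : (0:ℝ) ≤ 1 - l := by linarith
  have h := strictConcaveOn_log_Ioi.concaveOn.2 (Set.mem_Ioi.mpr hy)
    (Set.mem_Ioi.mpr (zero_lt_one)) h0 h1' (by ring)
  simpa using h

/-- For `n ≥ 1`, `1 < p < q < p*(n)` (the subcriticality condition is vacuous for
`n = 1, 2` where `p*(n) = ∞`) and `0 < ω < ω_{p,q}` we have `ω < ω_{σ,τ,p,q}`. -/
theorem omega_lt_omegaSig (p q ω : ℝ) (n : ℕ) (hn : 1 ≤ n)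
    (hp : 1 < p) (hpq : p < q)
    (hq : 3 ≤ n → q < ((n : ℝ) + 2) / ((n : ℝ) - 2))
    (hω : 0 < ω) (hωpq : ω < omegaPQ p q) :
    ω < omegaSig n p q := by
  have hq1 : (1:ℝ) < q := lt_trans hp hpq
  have hp1 : (0:ℝ) < p + 1 := by linarith
  have hq1' : (0:ℝ) < q - 1 := by linarith
  have hqp : (0:ℝ) < q - p := by linarith
  have hpm : (0:ℝ) < p - 1 := by linarith
  have hqp1 : (0:ℝ) < q + 1 := by linarith
  have hn1 : (1:ℝ) ≤ (n:ℝ) := by exact_mod_cast hn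
  -- positivity of tau
  have hτ : 0 < tau n q := by
    unfold tau
    rcases le_or_gt 3 n with h3 | h3
    · have h3' : (3:ℝ) ≤ (n:ℝ) := by exact_mod_cast h3
      have hq' := hq h3
      have h2 : (0:ℝ) < (n:ℝ) - 2 := by linarith
      rw [lt_div_iff₀ h2] at hq'
      rw [sub_pos, div_lt_div_iff₀ (by norm_num) (by linarith)]
      nlinarith
    · have h2 : (n:ℝ) ≤ 2 := by exact_mod_cast Nat.lt_succ_iff.mp h3
      have hpos : 0 < (n:ℝ)/(q+1) := div_pos (by linarith) (by linarith)
      linarith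
  -- positivity of sigma
  have hσ : 0 < sigma n p := by
    unfold sigma
    rcases le_or_gt 3 n with h3 | h3
    · have h3' : (3:ℝ) ≤ (n:ℝ) := by exact_mod_cast h3
      have hq' := hq h3
      have h2 : (0:ℝ) < (n:ℝ) - 2 := by linarith
      rw [lt_div_iff₀ h2] at hq'
      rw [sub_pos, div_lt_div_iff₀ (by norm_num) (by linarith)]
      nlinarith
    · have h2 : (n:ℝ) ≤ 2 := by exact_mod_cast Nat.lt_succ_iff.mp h3
      have hpos : 0 < (n:ℝ)/(p+1) := div_pos (by linarith) (by linarith)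
      linarith
  have ha : 0 < sigma n p * (p+1) := mul_pos hσ hp1
  have hb : 0 < tau n q * (q+1) := mul_pos hτ hqp1
  have ha2 : 0 < sigma n p * (p+1) / 2 := by linarith
  have hb2 : 0 < tau n q * (q+1) / 2 := by linarith
  -- concavity key inequality
  have hlam0 : 0 ≤ (p-1)/(q-1) := le_of_lt (div_pos hpm hq1')
  have hlam1 : (p-1)/(q-1) ≤ 1 := by rw [div_le_one hq1']; linarith
  have hcomb : (p-1)/(q-1) * (tau n q * (q+1) / 2) + (1 - (p-1)/(q-1))
      = sigma n p * (p+1) / 2 := by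
    unfold sigma tau
    field_simp
    ring
  have hkey : (p-1) * Real.log (tau n q * (q+1) / 2)
      ≤ (q-1) * Real.log (sigma n p * (p+1) / 2) := by
    have h := log_concave_aux (tau n q * (q+1) / 2) ((p-1)/(q-1)) hb2 hlam0 hlam1
    rw [hcomb] at h
    calc (p-1) * Real.log (tau n q * (q+1) / 2)
        = (q-1) * ((p-1)/(q-1) * Real.log (tau n q * (q+1) / 2)) := by
          field_simp
      _ ≤ (q-1) * Real.log (sigma n p * (p+1) / 2) :=
          mul_le_mul_of_nonneg_left h (le_of_lt hq1')
  -- the correction factor is at least 1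
  have hKpos : 0 < (sigma n p * (p+1) / 2) *
      ((sigma n p * (p+1) / 2) / (tau n q * (q+1) / 2)) ^ ((p-1)/(q-p)) := by
    positivity
  have hK1 : 1 ≤ (sigma n p * (p+1) / 2) *
      ((sigma n p * (p+1) / 2) / (tau n q * (q+1) / 2)) ^ ((p-1)/(q-p)) := by
    rw [← Real.exp_log hKpos]
    refine Real.one_le_exp ?_
    rw [Real.log_mul (ne_of_gt ha2) (by positivity),
        Real.log_rpow (by positivity),
        Real.log_div (ne_of_gt ha2) (ne_of_gt hb2)]
    have h2 : Real.log (sigma n p * (p+1) / 2)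
        + (p-1)/(q-p) * (Real.log (sigma n p * (p+1) / 2)
            - Real.log (tau n q * (q+1) / 2))
        = ((q-1) * Real.log (sigma n p * (p+1) / 2)
            - (p-1) * Real.log (tau n q * (q+1) / 2)) / (q-p) := by
      field_simp
      ring
    rw [h2]
    exact div_nonneg (by linarith) (le_of_lt hqp)
  -- factorization of omegaSig
  have hA : omegaSig n p q = omegaPQ p q * ((sigma n p * (p+1) / 2) *
      ((sigma n p * (p+1) / 2) / (tau n q * (q+1) / 2)) ^ ((p-1)/(q-p))) := by
    unfold omegaSig omegaPQ
    have hR : sigma n p * (p-1) / (tau n q * (q-1))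
        = ((p-1)*(q+1))/((p+1)*(q-1)) *
          ((sigma n p * (p+1) / 2) / (tau n q * (q+1) / 2)) := by
      field_simp
    rw [hR, Real.mul_rpow (by positivity) (by positivity)]
    field_simp
  calc ω < omegaPQ p q := hωpq
    _ ≤ omegaSig n p q := by
        rw [hA]
        exact le_mul_of_one_le_right (le_of_lt (lt_trans hω hωpq)) hK1
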